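/- arXiv:1510.02947 — 2 statements merged into one kernel-verified Lean document; each statement's English description precedes it below -/
import Mathlib

section
/- Bernoulli logarithmic Sobolev inequality: Let P = Bern(1/2)^{⊗n} be the uniform distribution on {0,1}ⁿ and X ∼ P. For every function f : {0,1}ⁿ → ℝ, D(P^{(f)} ‖ P) ≤ (1/8)·E[|Df(X)|²·e^{f(X)}] / E[e^{f(X)}], where Df(xⁿ) = √(Σ_{i=1}^n |f(xⁿ) − f(xⁿ ⊕ eᵢ)|²) and xⁿ ⊕ eᵢ denotes xⁿ with its i-th bit flipped. -/
open MeasureTheory ProbabilityTheory Real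
open scoped ENNReal

/-- The relative entropy (Kullback–Leibler divergence, in nats) `D(Q‖P) = ∫ log (dQ/dP) dQ`,
with value `∞` when `Q` is not absolutely continuous with respect to `P` or the integrand is
not integrable. -/
noncomputable def relEnt {Ω : Type*} [MeasurableSpace Ω] (Q P : Measure Ω) : ℝ≥0∞ :=
  open Classical in
  if Q ≪ P ∧ Integrable (fun ω => Real.log (Q.rnDeriv P ω).toReal) Q
  then ENNReal.ofReal (∫ ω, Real.log (Q.rnDeriv P ω).toReal ∂Q)
  else ⊤

section BLSAux
open Real Finset
lemma aux_nonneg (t : ℝ) :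
    0 ≤ t^2 * cosh t - 2*t*sinh t + 2*cosh t * log (cosh t) := by
  set u : ℝ → ℝ := fun t => t^2 * cosh t - 2*t*sinh t + 2*cosh t * log (cosh t) with hu
  have hderiv : ∀ s : ℝ, HasDerivAt u (s^2 * sinh s + 2 * sinh s * log (cosh s)) s := by
    intro s
    have h1 : HasDerivAt (fun x : ℝ => x^2 * cosh x) (2*s*cosh s + s^2 * sinh s) s := by
      have := (hasDerivAt_pow 2 s).mul (Real.hasDerivAt_cosh s)
      exact this.congr_deriv (by ring)
    have h2 : HasDerivAt (fun x : ℝ => 2*x*sinh x) (2*sinh s + 2*s*cosh s) s := by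
      have := ((hasDerivAt_id s).const_mul 2).mul (Real.hasDerivAt_sinh s)
      exact this.congr_deriv (by simp only [id]; ring)
    have h3 : HasDerivAt (fun x : ℝ => 2*cosh x * log (cosh x))
        (2 * sinh s * log (cosh s) + 2 * sinh s) s := by
      have hl : HasDerivAt (fun x : ℝ => log (cosh x)) (sinh s / cosh s) s :=
        (Real.hasDerivAt_cosh s).log (Real.cosh_pos s).ne'
      have := ((Real.hasDerivAt_cosh s).const_mul 2).mul hl
      exact this.congr_deriv (by field_simp)
    have := (h1.sub h2).add h3
    exact this.congr_deriv (by ring)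
  have heven : ∀ s : ℝ, u (-s) = u s := by
    intro s; simp only [hu]; rw [Real.cosh_neg, Real.sinh_neg]; ring
  have key : ∀ s : ℝ, 0 ≤ s → 0 ≤ u s := by
    intro s hs
    have hmono : MonotoneOn u (Set.Ici 0) := by
      apply monotoneOn_of_deriv_nonneg (convex_Ici 0)
      · exact fun x _ => ((hderiv x).continuousAt).continuousWithinAt
      · exact fun x _ => ((hderiv x).differentiableAt).differentiableWithinAt
      · intro x hx
        rw [(hderiv x).deriv]
        rw [interior_Ici] at hx
        have hx0 : (0:ℝ) < x := hx
        have hsx : 0 ≤ sinh x := (Real.sinh_pos_iff.mpr hx0).le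
        have hlc : 0 ≤ log (cosh x) := Real.log_nonneg (Real.one_le_cosh x)
        positivity
    have h0 : u 0 = 0 := by simp [hu]
    have := hmono (Set.self_mem_Ici) (Set.mem_Ici.mpr hs) hs
    rw [h0] at this; exact this
  rcases le_total 0 t with h | h
  · exact key t h
  · have := key (-t) (by linarith)
    rw [heven] at this; exact this

lemma two_point (a b : ℝ) :
    exp a * a + exp b * b - (exp a + exp b) * log ((exp a + exp b) / 2)
      ≤ (1/8) * (a - b)^2 * (exp a + exp b) := by
  set m := (a+b)/2 with hm
  set t := (a-b)/2 with ht
  have hea : exp a = exp m * (cosh t + sinh t) := by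
    rw [Real.cosh_add_sinh, ← Real.exp_add]; congr 1; rw [hm, ht]; ring
  have heb : exp b = exp m * (cosh t - sinh t) := by
    rw [Real.cosh_sub_sinh, ← Real.exp_add]; congr 1; rw [hm, ht]; ring
  have hsum : exp a + exp b = exp m * (2 * cosh t) := by rw [hea, heb]; ring
  have hlog : log ((exp a + exp b) / 2) = m + log (cosh t) := by
    rw [hsum]
    rw [show exp m * (2 * cosh t) / 2 = exp m * cosh t by ring]
    rw [Real.log_mul (Real.exp_pos m).ne' (Real.cosh_pos t).ne', Real.log_exp]
  have ha : a = m + t := by rw [hm, ht]; ring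
  have hb : b = m - t := by rw [hm, ht]; ring
  have key := mul_le_mul_of_nonneg_left (aux_nonneg t) (Real.exp_pos m).le
  rw [hlog, hea, heb]
  rw [show a - b = 2*t by rw [ht]; ring]
  nth_rewrite 1 [ha]
  nth_rewrite 1 [hb]
  nlinarith [key]

lemma log_sum_ineq {α : Type*} (s : Finset α) (a b : α → ℝ)
    (ha : ∀ x ∈ s, 0 < a x) (hb : ∀ x ∈ s, 0 < b x) :
    (∑ x ∈ s, a x) * log ((∑ x ∈ s, a x) / (∑ x ∈ s, b x))
      ≤ ∑ x ∈ s, a x * log (a x / b x) := by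
  rcases s.eq_empty_or_nonempty with rfl | hne
  · simp
  set A := ∑ x ∈ s, a x with hA
  set B := ∑ x ∈ s, b x with hB
  have hApos : 0 < A := Finset.sum_pos ha hne
  have hBpos : 0 < B := Finset.sum_pos hb hne
  have key : ∀ x ∈ s, a x * log (A / B) + (a x - (A/B) * b x) ≤ a x * log (a x / b x) := by
    intro x hx
    have hax := ha x hx
    have hbx := hb x hx
    have hlog := Real.log_le_sub_one_of_pos
      (show 0 < (b x * A) / (a x * B) by positivity)
    have hexp : log ((b x * A) / (a x * B)) = log (b x) + log A - (log (a x) + log B) := by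
      rw [Real.log_div (by positivity) (by positivity),
        Real.log_mul hbx.ne' hApos.ne', Real.log_mul hax.ne' hBpos.ne']
    rw [hexp] at hlog
    have hmul := mul_le_mul_of_nonneg_left hlog hax.le
    have heq : a x * ((b x * A) / (a x * B) - 1) = (A/B) * b x - a x := by
      field_simp
    rw [heq] at hmul
    rw [Real.log_div hApos.ne' hBpos.ne', Real.log_div hax.ne' hbx.ne']
    nlinarith [hmul]
  have hsum := Finset.sum_le_sum key
  rw [Finset.sum_add_distrib, ← Finset.sum_mul, Finset.sum_sub_distrib,
    ← Finset.mul_sum] at hsum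
  have : (A/B) * B = A := by field_simp
  rw [← hA, ← hB] at hsum
  rw [this] at hsum
  linarith [hsum]

-- φ(u,v) = u log u + v log v - (u+v) log((u+v)/2)
lemma phi_superadd {α : Type*} (s : Finset α) (u v : α → ℝ)
    (hu : ∀ x ∈ s, 0 < u x) (hv : ∀ x ∈ s, 0 < v x) :
    (∑ x ∈ s, u x) * log (∑ x ∈ s, u x) + (∑ x ∈ s, v x) * log (∑ x ∈ s, v x)
      - ((∑ x ∈ s, u x) + (∑ x ∈ s, v x)) * log (((∑ x ∈ s, u x) + (∑ x ∈ s, v x)) / 2)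
      ≤ ∑ x ∈ s, (u x * log (u x) + v x * log (v x) - (u x + v x) * log ((u x + v x) / 2)) := by
  rcases s.eq_empty_or_nonempty with rfl | hne
  · simp
  set U := ∑ x ∈ s, u x with hU
  set V := ∑ x ∈ s, v x with hV
  have hUpos : 0 < U := Finset.sum_pos hu hne
  have hVpos : 0 < V := Finset.sum_pos hv hne
  have huv : ∀ x ∈ s, 0 < u x + v x := fun x hx => by linarith [hu x hx, hv x hx]
  have h1 := log_sum_ineq s u (fun x => u x + v x) hu huv
  have h2 := log_sum_ineq s v (fun x => u x + v x) hv huv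
  have hsplit : ∀ x ∈ s,
      u x * log (u x) + v x * log (v x) - (u x + v x) * log ((u x + v x) / 2)
      = u x * log (u x / (u x + v x)) + v x * log (v x / (u x + v x))
        + (u x + v x) * log 2 := by
    intro x hx
    have h1 := hu x hx; have h2 := hv x hx; have h3 := huv x hx
    rw [Real.log_div h1.ne' h3.ne', Real.log_div h2.ne' h3.ne',
      Real.log_div h3.ne' two_ne_zero]
    ring
  rw [Finset.sum_congr rfl hsplit, Finset.sum_add_distrib, Finset.sum_add_distrib,
    ← Finset.sum_mul]
  have hsumuv : ∑ x ∈ s, (u x + v x) = U + V := by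
    rw [Finset.sum_add_distrib, ← hU, ← hV]
  rw [hsumuv] at h1 h2 ⊢
  have h1' : U * log (U/(U+V)) ≤ ∑ x ∈ s, u x * log (u x / (u x + v x)) := h1
  have h2' : V * log (V/(U+V)) ≤ ∑ x ∈ s, v x * log (v x / (u x + v x)) := h2
  have hUV : 0 < U + V := by linarith
  have hexp : log ((U + V) / 2) = log (U + V) - log 2 := Real.log_div hUV.ne' two_ne_zero
  have e1 : log (U / (U + V)) = log U - log (U + V) := Real.log_div hUpos.ne' hUV.ne'
  have e2 : log (V / (U + V)) = log V - log (U + V) := Real.log_div hVpos.ne' hUV.ne'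
  rw [hexp]
  rw [e1] at h1'
  rw [e2] at h2'
  nlinarith [h1', h2']

lemma core : ∀ (n : ℕ) (f : (Fin n → Bool) → ℝ),
    (∑ x, exp (f x) * f x)
      - (∑ x, exp (f x)) * log ((∑ x, exp (f x)) / 2^n)
    ≤ (1/8) * ∑ x, (∑ i, (f x - f (Function.update x i (!(x i))))^2) * exp (f x) := by
  intro n
  induction n with
  | zero =>
    intro f
    have h : ∀ g : (Fin 0 → Bool) → ℝ, ∑ x, g x = g (fun i => i.elim0) :=
      fun g => Fintype.sum_subsingleton g _
    rw [h, h, h]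
    simp [Real.log_exp]
  | succ n IH =>
    intro f
    have hsplit : ∀ g : (Fin (n+1) → Bool) → ℝ,
        ∑ x, g x = ∑ b : Bool, ∑ y : Fin n → Bool, g (Fin.cons b y) := by
      intro g
      rw [← Equiv.sum_comp (Fin.consEquiv fun _ => Bool) g, Fintype.sum_prod_type]
      rfl
    have hflip0 : ∀ (b : Bool) (y : Fin n → Bool),
        Function.update (Fin.cons b y : Fin (n+1) → Bool) 0 (!((Fin.cons b y : Fin (n+1) → Bool) 0)) = Fin.cons (!b) y := by
      intro b y; rw [Fin.cons_zero, Fin.update_cons_zero]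
    have hflipS : ∀ (b : Bool) (y : Fin n → Bool) (i : Fin n),
        Function.update (Fin.cons b y : Fin (n+1) → Bool) i.succ (!((Fin.cons b y : Fin (n+1) → Bool) i.succ))
          = Fin.cons b (Function.update y i (!(y i))) := by
      intro b y i; rw [Fin.cons_succ, Fin.cons_update]
    have hGamma : ∀ (b : Bool) (y : Fin n → Bool),
        (∑ i : Fin (n+1), (f (Fin.cons b y)
            - f (Function.update (Fin.cons b y : Fin (n+1) → Bool) i (!((Fin.cons b y : Fin (n+1) → Bool) i))))^2)
        = (f (Fin.cons b y) - f (Fin.cons (!b) y))^2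
          + ∑ i : Fin n, (f (Fin.cons b y)
              - f (Fin.cons b (Function.update y i (!(y i)))))^2 := by
      intro b y
      rw [Fin.sum_univ_succ, hflip0]
      congr 1
      exact Finset.sum_congr rfl fun i _ => by rw [hflipS]
    -- abbreviations (plain haves, defeq)
    have hIH : ∀ b : Bool,
        (∑ y, exp (f (Fin.cons b y)) * f (Fin.cons b y))
          - (∑ y, exp (f (Fin.cons b y)))
            * log ((∑ y, exp (f (Fin.cons b y))) / 2^n)
        ≤ (1/8) * ∑ y, (∑ i, (f (Fin.cons b y)
            - f (Fin.cons b (Function.update y i (!(y i)))))^2) * exp (f (Fin.cons b y)) :=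
      fun b => IH (fun y => f (Fin.cons b y))
    have hApos : ∀ b : Bool, 0 < ∑ y, exp (f (Fin.cons b y)) :=
      fun b => Finset.sum_pos (fun y _ => Real.exp_pos _) Finset.univ_nonempty
    -- phi superadditivity + two-point
    have hpoint : ∀ y : Fin n → Bool,
        exp (f (Fin.cons false y)) * log (exp (f (Fin.cons false y)))
          + exp (f (Fin.cons true y)) * log (exp (f (Fin.cons true y)))
          - (exp (f (Fin.cons false y)) + exp (f (Fin.cons true y)))
            * log ((exp (f (Fin.cons false y)) + exp (f (Fin.cons true y))) / 2)
        ≤ (1/8) * (f (Fin.cons false y) - f (Fin.cons true y))^2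
            * (exp (f (Fin.cons false y)) + exp (f (Fin.cons true y))) := by
      intro y
      simpa [Real.log_exp] using two_point (f (Fin.cons false y)) (f (Fin.cons true y))
    have hphi := phi_superadd Finset.univ
        (fun y => exp (f (Fin.cons false y))) (fun y => exp (f (Fin.cons true y)))
        (fun y _ => Real.exp_pos _) (fun y _ => Real.exp_pos _)
    have hphi2 : (∑ y, exp (f (Fin.cons false y))) * log (∑ y, exp (f (Fin.cons false y)))
        + (∑ y, exp (f (Fin.cons true y))) * log (∑ y, exp (f (Fin.cons true y)))
        - ((∑ y, exp (f (Fin.cons false y))) + (∑ y, exp (f (Fin.cons true y))))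
          * log (((∑ y, exp (f (Fin.cons false y))) + (∑ y, exp (f (Fin.cons true y)))) / 2)
        ≤ (1/8) * ∑ y, (f (Fin.cons false y) - f (Fin.cons true y))^2
            * (exp (f (Fin.cons false y)) + exp (f (Fin.cons true y))) := by
      refine le_trans hphi ?_
      rw [Finset.mul_sum]
      refine Finset.sum_le_sum fun y _ => ?_
      refine le_trans (hpoint y) (le_of_eq (by ring))
    -- logarithm identity
    have hAf := hApos false
    have hAt := hApos true
    have hS : (0:ℝ) < (∑ y, exp (f (Fin.cons false y))) + (∑ y, exp (f (Fin.cons true y))) :=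
      by linarith
    have hid :
        (∑ y, exp (f (Fin.cons false y))) * log ((∑ y, exp (f (Fin.cons false y))) / 2^n)
        + (∑ y, exp (f (Fin.cons true y))) * log ((∑ y, exp (f (Fin.cons true y))) / 2^n)
        - ((∑ y, exp (f (Fin.cons false y))) + (∑ y, exp (f (Fin.cons true y))))
          * log (((∑ y, exp (f (Fin.cons false y))) + (∑ y, exp (f (Fin.cons true y)))) / 2^(n+1))
        = (∑ y, exp (f (Fin.cons false y))) * log (∑ y, exp (f (Fin.cons false y)))
        + (∑ y, exp (f (Fin.cons true y))) * log (∑ y, exp (f (Fin.cons true y)))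
        - ((∑ y, exp (f (Fin.cons false y))) + (∑ y, exp (f (Fin.cons true y))))
          * log (((∑ y, exp (f (Fin.cons false y))) + (∑ y, exp (f (Fin.cons true y)))) / 2) := by
      rw [Real.log_div hAf.ne' (by positivity), Real.log_div hAt.ne' (by positivity),
        Real.log_div hS.ne' (by positivity), Real.log_div hS.ne' (by positivity),
        Real.log_pow, Real.log_pow]
      push_cast
      ring
    -- rewrite goal sums
    rw [hsplit (fun x => exp (f x) * f x), hsplit (fun x => exp (f x)),
      hsplit (fun x => (∑ i, (f x - f (Function.update x i (!(x i))))^2) * exp (f x))]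
    have hG : ∀ b : Bool, ∑ y, (∑ i : Fin (n+1), (f (Fin.cons b y)
            - f (Function.update (Fin.cons b y : Fin (n+1) → Bool) i (!((Fin.cons b y : Fin (n+1) → Bool) i))))^2) * exp (f (Fin.cons b y))
        = ∑ y, ((f (Fin.cons b y) - f (Fin.cons (!b) y))^2
            + ∑ i : Fin n, (f (Fin.cons b y)
              - f (Fin.cons b (Function.update y i (!(y i)))))^2) * exp (f (Fin.cons b y)) :=
      fun b => Finset.sum_congr rfl fun y _ => by rw [hGamma]
    rw [Fintype.sum_bool, Fintype.sum_bool, Fintype.sum_bool, hG, hG]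
    rw [add_comm (∑ y : Fin n → Bool, exp (f (Fin.cons true y)))
      (∑ y : Fin n → Bool, exp (f (Fin.cons false y)))]
    -- expand products in the gradient sums
    have hGexp : ∀ b : Bool, ∑ y, ((f (Fin.cons b y) - f (Fin.cons (!b) y))^2
            + ∑ i : Fin n, (f (Fin.cons b y)
              - f (Fin.cons b (Function.update y i (!(y i)))))^2) * exp (f (Fin.cons b y))
        = (∑ y, (f (Fin.cons b y) - f (Fin.cons (!b) y))^2 * exp (f (Fin.cons b y)))
          + ∑ y, (∑ i : Fin n, (f (Fin.cons b y)
              - f (Fin.cons b (Function.update y i (!(y i)))))^2) * exp (f (Fin.cons b y)) := by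
      intro b
      rw [← Finset.sum_add_distrib]
      exact Finset.sum_congr rfl fun y _ => by ring
    rw [hGexp, hGexp]
    -- symmetrize the cross term for b = true
    have hsym : ∑ y, (f (Fin.cons true y) - f (Fin.cons (!true) y))^2 * exp (f (Fin.cons true y))
        = ∑ y, (f (Fin.cons false y) - f (Fin.cons true y))^2 * exp (f (Fin.cons true y)) :=
      Finset.sum_congr rfl fun y _ => by norm_num; ring
    rw [hsym]
    have hC : ∑ y, (f (Fin.cons false y) - f (Fin.cons true y))^2
            * (exp (f (Fin.cons false y)) + exp (f (Fin.cons true y)))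
        = (∑ y, (f (Fin.cons false y) - f (Fin.cons (!false) y))^2 * exp (f (Fin.cons false y)))
          + ∑ y, (f (Fin.cons false y) - f (Fin.cons true y))^2 * exp (f (Fin.cons true y)) := by
      rw [← Finset.sum_add_distrib]
      exact Finset.sum_congr rfl fun y _ => by norm_num; ring
    rw [hC] at hphi2
    have h1 := hIH false
    have h2 := hIH true
    linarith [h1, h2, hphi2, hid]

end BLSAux

/-- **Bernoulli logarithmic Sobolev inequality**: let `P = Bern(1/2)^{⊗n}` be the uniform
distribution on `{0,1}ⁿ` and `X ∼ P`.  For every `f : {0,1}ⁿ → ℝ`,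
`D(P^{(f)} ‖ P) ≤ (1/8) E[|Df(X)|² e^{f(X)}] / E[e^{f(X)}]`, where
`|Df(x)|² = ∑ i, |f(x) - f(x ⊕ eᵢ)|²` and `x ⊕ eᵢ` is `x` with its `i`-th bit flipped. -/
theorem bernoulli_log_sobolev
    {n : ℕ} (P : Measure (Fin n → Bool))
    (hP : P = (PMF.uniformOfFintype (Fin n → Bool)).toMeasure)
    (f : (Fin n → Bool) → ℝ) :
    relEnt (P.tilted f) P
      ≤ ENNReal.ofReal ((1 / 8) *
          (∫ x, (∑ i : Fin n, (f x - f (Function.update x i (!(x i)))) ^ 2) * Real.exp (f x) ∂P)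
            / ∫ x, Real.exp (f x) ∂P) := by
  have hPprob : IsProbabilityMeasure P := by rw [hP]; infer_instance
  have hint : ∀ g : (Fin n → Bool) → ℝ, Integrable g P := fun g => .of_finite
  have hQprob : IsProbabilityMeasure (P.tilted f) :=
    isProbabilityMeasure_tilted (hint _)
  have hintQ : ∀ g : (Fin n → Bool) → ℝ, Integrable g (P.tilted f) := fun g => .of_finite
  have hQP : P.tilted f ≪ P := tilted_absolutelyContinuous P f
  have hZpos : 0 < ∫ x, exp (f x) ∂P := integral_exp_pos (hint _)
  -- identify the relative entropy
  have hlogP := log_rnDeriv_tilted_left_self (μ := P) (f := f) (hint _)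
  have hlogQ : (fun x => Real.log (((P.tilted f).rnDeriv P) x).toReal)
      =ᵐ[P.tilted f] fun x => f x - log (∫ x, exp (f x) ∂P) := hQP.ae_le hlogP
  have hrel : relEnt (P.tilted f) P
      = ENNReal.ofReal (∫ x, (f x - log (∫ x, exp (f x) ∂P)) ∂(P.tilted f)) := by
    rw [relEnt, if_pos ⟨hQP, hintQ _⟩]
    rw [integral_congr_ae hlogQ]
  rw [hrel]
  -- compute the Q-integral
  have hQint : ∫ x, (f x - log (∫ x, exp (f x) ∂P)) ∂(P.tilted f)
      = (∫ x, (exp (f x) / ∫ x, exp (f x) ∂P) • f x ∂P) - log (∫ x, exp (f x) ∂P) := by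
    rw [integral_sub (hintQ _) (integrable_const _), integral_const, integral_tilted]
    simp [measure_univ]
  rw [hQint]
  -- convert all integrals to sums
  have hPx : ∀ x : Fin n → Bool, (P {x}).toReal = ((2:ℝ)^n)⁻¹ := by
    intro x
    rw [hP, PMF.toMeasure_apply_singleton _ _ (measurableSet_singleton x),
      PMF.uniformOfFintype_apply]
    have hcard : (Fintype.card (Fin n → Bool)) = 2^n := by simp
    rw [hcard, ENNReal.toReal_inv]
    norm_num
  have hsum : ∀ g : (Fin n → Bool) → ℝ,
      ∫ x, g x ∂P = ((2:ℝ)^n)⁻¹ * ∑ x, g x := by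
    intro g
    rw [integral_fintype (hint g)]
    simp_rw [Measure.real, hPx, smul_eq_mul]
    rw [← Finset.mul_sum]
  rw [hsum (fun x => exp (f x))] at hZpos ⊢
  rw [hsum, hsum]
  apply ENNReal.ofReal_le_ofReal
  -- pure real inequality
  set c : ℝ := (2:ℝ)^n with hc
  have hcpos : (0:ℝ) < c := by positivity
  set S : ℝ := ∑ x, exp (f x) with hS
  have hSpos : 0 < S :=
    Finset.sum_pos (fun x _ => Real.exp_pos _) Finset.univ_nonempty
  set E1 : ℝ := ∑ x, exp (f x) * f x with hE1
  set E2 : ℝ := ∑ x : Fin n → Bool,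
    (∑ i : Fin n, (f x - f (Function.update x i (!(x i))))^2) * exp (f x) with hE2
  have hcore : E1 - S * log (S / c) ≤ 1/8 * E2 := core n f
  have hsum1 : ∑ x : Fin n → Bool, (exp (f x) / (c⁻¹ * S)) • f x = E1 / (c⁻¹ * S) := by
    rw [hE1, Finset.sum_div]
    exact Finset.sum_congr rfl fun x _ => by rw [smul_eq_mul]; ring
  rw [hsum1]
  have hlogeq : log (c⁻¹ * S) = log (S / c) := by rw [inv_mul_eq_div]
  rw [hlogeq]
  have key : (E1 - S * log (S/c))/S ≤ (1/8 * E2)/S :=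
    (div_le_div_iff_of_pos_right hSpos).mpr hcore
  calc c⁻¹ * (E1 / (c⁻¹ * S)) - log (S / c)
      = (E1 - S * log (S/c))/S := by field_simp
    _ ≤ (1/8 * E2)/S := key
    _ = 1/8 * (c⁻¹ * E2) / (c⁻¹ * S) := by field_simp
end

section
/- Maurer's variance representation of the relative entropy: Let X be a random variable with law P and let f be a measurable real-valued function such that E_P[exp(λf(X))] < ∞ for all λ in a neighborhood of [0, λ₀]. Then for every λ ∈ [0, λ₀], D(P^{(λf)} ‖ P) = ∫₀^λ ∫_t^λ Var^{(sf)}[f(X)] ds dt, where Var^{(sf)}[f(X)] denotes the variance of f(X) under the tilted distribution P^{(sf)}. -/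
open MeasureTheory ProbabilityTheory Real

/-- The relative entropy (in nats) `D(Q‖P) = ∫ log (dQ/dP) dQ`, as a real number (meaningful
when `Q ≪ P` and the integrand is `Q`-integrable). -/
noncomputable def relEntR {Ω : Type*} [MeasurableSpace Ω] (Q P : Measure Ω) : ℝ :=
  ∫ ω, Real.log (Q.rnDeriv P ω).toReal ∂Q

lemma maurer_pow_le_exp (n : ℕ) {x : ℝ} (hx : 0 ≤ x) :
    x ^ n ≤ n.factorial * Real.exp x := by
  have h1 : x ^ n / n.factorial ≤ ∑ i ∈ Finset.range (n + 1), x ^ i / i.factorial :=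
    Finset.single_le_sum (f := fun i => x ^ i / i.factorial)
      (fun i _ => by positivity) (Finset.self_mem_range_succ n)
  have h2 := Real.sum_le_exp_of_nonneg hx (n + 1)
  have hfact : (0 : ℝ) < n.factorial := by positivity
  have := h1.trans h2
  rw [div_le_iff₀ hfact] at this
  linarith

/-- key pointwise bound -/
lemma maurer_ptwise (n : ℕ) {δ : ℝ} (hδ : 0 < δ) (t x : ℝ) :
    |x| ^ n * Real.exp (t * x)
      ≤ n.factorial / δ ^ n * (Real.exp ((t + δ) * x) + Real.exp ((t - δ) * x)) := by
  have h1 : (δ * |x|) ^ n ≤ n.factorial * Real.exp (δ * |x|) :=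
    maurer_pow_le_exp n (by positivity)
  have h2 : Real.exp (δ * |x|) ≤ Real.exp (δ * x) + Real.exp (-(δ * x)) := by
    rcases abs_cases x with ⟨h, _⟩ | ⟨h, _⟩
    · rw [h]; nlinarith [Real.exp_pos (-(δ * x))]
    · rw [h, mul_neg]; nlinarith [Real.exp_pos (δ * x)]
  have hxn : |x| ^ n ≤ n.factorial / δ ^ n * (Real.exp (δ * x) + Real.exp (-(δ * x))) := by
    have hδn : (0 : ℝ) < δ ^ n := by positivity
    have hf : (0:ℝ) ≤ (n.factorial : ℝ) := by positivity
    have h3 : δ ^ n * |x| ^ n ≤ n.factorial * (Real.exp (δ * x) + Real.exp (-(δ * x))) := by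
      rw [mul_pow] at h1
      exact h1.trans (mul_le_mul_of_nonneg_left h2 hf)
    rw [div_mul_eq_mul_div, le_div_iff₀ hδn]
    nlinarith
  have e1 : Real.exp ((t + δ) * x) = Real.exp (t * x) * Real.exp (δ * x) := by
    rw [← Real.exp_add]; ring_nf
  have e2 : Real.exp ((t - δ) * x) = Real.exp (t * x) * Real.exp (-(δ * x)) := by
    rw [← Real.exp_add]; ring_nf
  calc |x| ^ n * Real.exp (t * x)
      ≤ n.factorial / δ ^ n * (Real.exp (δ * x) + Real.exp (-(δ * x))) * Real.exp (t * x) :=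
        mul_le_mul_of_nonneg_right hxn (Real.exp_nonneg _)
    _ = n.factorial / δ ^ n * (Real.exp ((t + δ) * x) + Real.exp ((t - δ) * x)) := by
        rw [e1, e2]; ring

lemma maurer_delta {ε lam₀ t : ℝ} (ht : t ∈ Set.Ioo (-ε) (lam₀ + ε)) :
    0 < min (t + ε) (lam₀ + ε - t) / 2 ∧
    t + min (t + ε) (lam₀ + ε - t) / 2 ∈ Set.Ioo (-ε) (lam₀ + ε) ∧
    t - min (t + ε) (lam₀ + ε - t) / 2 ∈ Set.Ioo (-ε) (lam₀ + ε) := by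
  obtain ⟨h1, h2⟩ := ht
  have ha := min_le_left (t + ε) (lam₀ + ε - t)
  have hb := min_le_right (t + ε) (lam₀ + ε - t)
  have hpos : 0 < min (t + ε) (lam₀ + ε - t) := lt_min (by linarith) (by linarith)
  refine ⟨by linarith, ⟨by linarith, by linarith⟩, ⟨by linarith, by linarith⟩⟩

lemma maurer_integrable {Ω : Type*} [MeasurableSpace Ω] (P : Measure Ω) [IsProbabilityMeasure P]
    (f : Ω → ℝ) (hfmeas : Measurable f) (lam₀ ε : ℝ)
    (hexp : ∀ t ∈ Set.Ioo (-ε) (lam₀ + ε), Integrable (fun ω => Real.exp (t * f ω)) P)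
    (n : ℕ) {t : ℝ} (ht : t ∈ Set.Ioo (-ε) (lam₀ + ε)) :
    Integrable (fun ω => |f ω| ^ n * Real.exp (t * f ω)) P := by
  obtain ⟨hδ, h1, h2⟩ := maurer_delta ht
  set δ := min (t + ε) (lam₀ + ε - t) / 2 with hδdef
  have hint : Integrable
      (fun ω => n.factorial / δ ^ n * (Real.exp ((t + δ) * f ω) + Real.exp ((t - δ) * f ω))) P :=
    ((hexp _ h1).add (hexp _ h2)).const_mul _
  refine hint.mono' ?_ ?_
  · exact ((hfmeas.abs.pow_const n).mul
      (measurable_exp.comp (hfmeas.const_mul t))).aestronglyMeasurable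
  · filter_upwards with ω
    rw [Real.norm_of_nonneg (by positivity)]
    exact maurer_ptwise n hδ t (f ω)

lemma maurer_integrable' {Ω : Type*} [MeasurableSpace Ω] (P : Measure Ω) [IsProbabilityMeasure P]
    (f : Ω → ℝ) (hfmeas : Measurable f) (lam₀ ε : ℝ)
    (hexp : ∀ t ∈ Set.Ioo (-ε) (lam₀ + ε), Integrable (fun ω => Real.exp (t * f ω)) P)
    (n : ℕ) {t : ℝ} (ht : t ∈ Set.Ioo (-ε) (lam₀ + ε)) :
    Integrable (fun ω => f ω ^ n * Real.exp (t * f ω)) P := by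
  refine (maurer_integrable P f hfmeas lam₀ ε hexp n ht).mono' ?_ ?_
  · exact ((hfmeas.pow_const n).mul
      (measurable_exp.comp (hfmeas.const_mul t))).aestronglyMeasurable
  · filter_upwards with ω
    rw [norm_mul, norm_pow, Real.norm_eq_abs, Real.norm_of_nonneg (Real.exp_nonneg _)]

lemma maurer_hasDerivAt {Ω : Type*} [MeasurableSpace Ω] (P : Measure Ω) [IsProbabilityMeasure P]
    (f : Ω → ℝ) (hfmeas : Measurable f) (lam₀ ε : ℝ)
    (hexp : ∀ t ∈ Set.Ioo (-ε) (lam₀ + ε), Integrable (fun ω => Real.exp (t * f ω)) P)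
    (n : ℕ) {t : ℝ} (ht : t ∈ Set.Ioo (-ε) (lam₀ + ε)) :
    HasDerivAt (fun u => ∫ ω, f ω ^ n * Real.exp (u * f ω) ∂P)
      (∫ ω, f ω ^ (n + 1) * Real.exp (t * f ω) ∂P) t := by
  obtain ⟨hδ, h1, h2⟩ := maurer_delta ht
  set δ := min (t + ε) (lam₀ + ε - t) / 2 with hδdef
  have hbnd : Integrable (fun ω =>
      |f ω| ^ (n + 1) * Real.exp ((t + δ) * f ω)
        + |f ω| ^ (n + 1) * Real.exp ((t - δ) * f ω)) P :=
    (maurer_integrable P f hfmeas lam₀ ε hexp (n + 1) h1).add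
      (maurer_integrable P f hfmeas lam₀ ε hexp (n + 1) h2)
  refine (hasDerivAt_integral_of_dominated_loc_of_deriv_le (F := fun u ω => f ω ^ n * Real.exp (u * f ω))
      (F' := fun u ω => f ω ^ (n + 1) * Real.exp (u * f ω))
      (bound := fun ω => |f ω| ^ (n + 1) * Real.exp ((t + δ) * f ω)
        + |f ω| ^ (n + 1) * Real.exp ((t - δ) * f ω)) (Metric.ball_mem_nhds t hδ) ?_ ?_ ?_ ?_ hbnd ?_).2
  · filter_upwards with u
    exact ((hfmeas.pow_const n).mul
      (measurable_exp.comp (hfmeas.const_mul u))).aestronglyMeasurable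
  · exact maurer_integrable' P f hfmeas lam₀ ε hexp n ht
  · exact ((hfmeas.pow_const (n+1)).mul
      (measurable_exp.comp (hfmeas.const_mul t))).aestronglyMeasurable
  · filter_upwards with ω u hu
    rw [Metric.mem_ball, Real.dist_eq, abs_lt] at hu
    have hnorm : ‖f ω ^ (n + 1) * Real.exp (u * f ω)‖ = |f ω| ^ (n + 1) * Real.exp (u * f ω) := by
      rw [norm_mul, norm_pow, Real.norm_eq_abs, Real.norm_of_nonneg (Real.exp_nonneg _)]
    rw [hnorm]
    have hexp_le : Real.exp (u * f ω)
        ≤ Real.exp ((t + δ) * f ω) + Real.exp ((t - δ) * f ω) := by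
      rcases le_or_gt 0 (f ω) with hf0 | hf0
      · have : Real.exp (u * f ω) ≤ Real.exp ((t + δ) * f ω) :=
          Real.exp_le_exp.2 (mul_le_mul_of_nonneg_right (by linarith) hf0)
        linarith [Real.exp_pos ((t - δ) * f ω)]
      · have : Real.exp (u * f ω) ≤ Real.exp ((t - δ) * f ω) :=
          Real.exp_le_exp.2 (by nlinarith)
        linarith [Real.exp_pos ((t + δ) * f ω)]
    calc |f ω| ^ (n + 1) * Real.exp (u * f ω)
        ≤ |f ω| ^ (n + 1) * (Real.exp ((t + δ) * f ω) + Real.exp ((t - δ) * f ω)) :=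
          mul_le_mul_of_nonneg_left hexp_le (by positivity)
      _ = _ := by ring
  · filter_upwards with ω u _
    have h := (((hasDerivAt_id u).mul_const (f ω)).exp).const_mul (f ω ^ n)
    refine h.congr_deriv ?_
    simp only [id, one_mul, pow_succ]; ring

lemma maurer_integral_pow_tilted {Ω : Type*} [MeasurableSpace Ω] (P : Measure Ω)
    (f : Ω → ℝ) (t : ℝ) (n : ℕ) :
    ∫ ω, f ω ^ n ∂(P.tilted (fun ω => t * f ω))
      = (∫ ω, f ω ^ n * Real.exp (t * f ω) ∂P) / (∫ ω, Real.exp (t * f ω) ∂P) := by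
  rw [integral_tilted]
  have h : ∀ ω, (Real.exp (t * f ω) / ∫ ω, Real.exp (t * f ω) ∂P) • (f ω ^ n)
      = (f ω ^ n * Real.exp (t * f ω)) / (∫ ω, Real.exp (t * f ω) ∂P) := by
    intro ω; rw [smul_eq_mul]; ring
  simp_rw [h]
  rw [integral_div]

lemma maurer_integrable_pow_tilted {Ω : Type*} [MeasurableSpace Ω] (P : Measure Ω)
    [IsProbabilityMeasure P]
    (f : Ω → ℝ) (hfmeas : Measurable f) (lam₀ ε : ℝ)
    (hexp : ∀ t ∈ Set.Ioo (-ε) (lam₀ + ε), Integrable (fun ω => Real.exp (t * f ω)) P)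
    (n : ℕ) {t : ℝ} (ht : t ∈ Set.Ioo (-ε) (lam₀ + ε)) :
    Integrable (fun ω => f ω ^ n) (P.tilted (fun ω => t * f ω)) := by
  rw [Measure.tilted]
  set M := ∫ ω, Real.exp (t * f ω) ∂P with hM
  have hdens : Measurable fun ω => ENNReal.ofReal (Real.exp (t * f ω) / M) :=
    ((measurable_exp.comp (hfmeas.const_mul t)).div_const M).ennreal_ofReal
  rw [integrable_withDensity_iff hdens (Filter.Eventually.of_forall fun _ => ENNReal.ofReal_lt_top)]
  have hMnn : 0 ≤ M := integral_nonneg fun ω => (Real.exp_nonneg _)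
  refine ((maurer_integrable' P f hfmeas lam₀ ε hexp n ht).div_const M).congr ?_
  filter_upwards with ω
  rw [ENNReal.toReal_ofReal (by positivity)]
  ring

lemma maurer_variance {Ω : Type*} [MeasurableSpace Ω] (P : Measure Ω)
    [IsProbabilityMeasure P]
    (f : Ω → ℝ) (hfmeas : Measurable f) (lam₀ ε : ℝ)
    (hexp : ∀ t ∈ Set.Ioo (-ε) (lam₀ + ε), Integrable (fun ω => Real.exp (t * f ω)) P)
    {t : ℝ} (ht : t ∈ Set.Ioo (-ε) (lam₀ + ε)) :
    variance f (P.tilted (fun ω => t * f ω))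
      = (∫ ω, f ω ^ 2 * Real.exp (t * f ω) ∂P) / (∫ ω, Real.exp (t * f ω) ∂P)
        - ((∫ ω, f ω ^ 1 * Real.exp (t * f ω) ∂P) / (∫ ω, Real.exp (t * f ω) ∂P)) ^ 2 := by
  haveI : IsProbabilityMeasure (P.tilted (fun ω => t * f ω)) :=
    isProbabilityMeasure_tilted (hexp t ht)
  have hmem : MemLp f 2 (P.tilted (fun ω => t * f ω)) := by
    rw [memLp_two_iff_integrable_sq hfmeas.aestronglyMeasurable]
    exact maurer_integrable_pow_tilted P f hfmeas lam₀ ε hexp 2 ht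
  rw [variance_eq_sub hmem]
  have h2 : ∫ ω, (f ^ 2) ω ∂(P.tilted (fun ω => t * f ω))
      = ∫ ω, f ω ^ 2 ∂(P.tilted (fun ω => t * f ω)) := by simp [Pi.pow_apply]
  rw [h2, maurer_integral_pow_tilted]
  have h1 : ∫ ω, f ω ∂(P.tilted (fun ω => t * f ω))
      = ∫ ω, f ω ^ 1 ∂(P.tilted (fun ω => t * f ω)) := by simp
  rw [h1, maurer_integral_pow_tilted]


/-- **Maurer's variance representation of the relative entropy**: let `X ∼ P` and let `f` be
measurable with `E_P[exp (λ f)] < ∞` for all `λ` in a neighborhood of `[0, λ₀]`.  Then for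
every `λ ∈ [0, λ₀]`,
`D(P^{(λ f)} ‖ P) = ∫₀^λ ∫_t^λ Var^{(s f)}[f(X)] ds dt`,
where `Var^{(s f)}[f(X)]` is the variance of `f(X)` under the tilted distribution
`P^{(s f)}`. -/
theorem maurer_relEnt_eq_double_integral_variance
    {Ω : Type*} [MeasurableSpace Ω] (P : Measure Ω) [IsProbabilityMeasure P]
    (f : Ω → ℝ) (hfmeas : Measurable f)
    (lam₀ : ℝ) (hlam₀ : 0 ≤ lam₀)
    (ε : ℝ) (hε : 0 < ε)
    (hexp : ∀ t ∈ Set.Ioo (-ε) (lam₀ + ε), Integrable (fun ω => Real.exp (t * f ω)) P)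
    (lam : ℝ) (hlam : lam ∈ Set.Icc 0 lam₀) :
    relEntR (P.tilted (fun ω => lam * f ω)) P
      = ∫ t in (0 : ℝ)..lam, ∫ s in t..lam, variance f (P.tilted (fun ω => s * f ω)) := by
  obtain ⟨hlam0, hlamle⟩ := hlam
  have hsub : Set.Icc (0 : ℝ) lam ⊆ Set.Ioo (-ε) (lam₀ + ε) := fun x hx =>
    ⟨by linarith [hx.1], by linarith [hx.2]⟩
  have hlamS : lam ∈ Set.Ioo (-ε) (lam₀ + ε) := hsub ⟨hlam0, le_refl lam⟩
  set I : ℕ → ℝ → ℝ := fun n t => ∫ ω, f ω ^ n * Real.exp (t * f ω) ∂P with hIdef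
  set M : ℝ → ℝ := fun t => ∫ ω, Real.exp (t * f ω) ∂P with hMdef
  have hI0 : I 0 = M := by
    funext t; simp only [hIdef, hMdef, pow_zero, one_mul]
  have hpos : ∀ t ∈ Set.Ioo (-ε) (lam₀ + ε), 0 < M t := fun t ht =>
    integral_exp_pos (hexp t ht)
  have hder : ∀ (n : ℕ), ∀ t ∈ Set.Ioo (-ε) (lam₀ + ε), HasDerivAt (I n) (I (n + 1) t) t :=
    fun n t ht => maurer_hasDerivAt P f hfmeas lam₀ ε hexp n ht
  set φ : ℝ → ℝ := fun t => I 1 t / M t with hφdef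
  set ψ : ℝ → ℝ := fun t => Real.log (M t) with hψdef
  set V : ℝ → ℝ := fun t => variance f (P.tilted (fun ω => t * f ω)) with hVdef
  have hψ : ∀ t ∈ Set.Ioo (-ε) (lam₀ + ε), HasDerivAt ψ (φ t) t := by
    intro t ht
    have h0 := hder 0 t ht
    rw [hI0] at h0
    exact h0.log (hpos t ht).ne'
  have hVeq : ∀ t ∈ Set.Ioo (-ε) (lam₀ + ε), V t = I 2 t / M t - (I 1 t / M t) ^ 2 :=
    fun t ht => maurer_variance P f hfmeas lam₀ ε hexp ht
  have hφ : ∀ t ∈ Set.Ioo (-ε) (lam₀ + ε), HasDerivAt φ (V t) t := by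
    intro t ht
    have h1 := hder 1 t ht
    have h0 := hder 0 t ht
    rw [hI0] at h0
    have hne := (hpos t ht).ne'
    have hdiv := h1.div h0 hne
    refine hdiv.congr_deriv ?_
    rw [hVeq t ht]
    field_simp
  have hVcont : ∀ t ∈ Set.Ioo (-ε) (lam₀ + ε), ContinuousAt V t := by
    intro t ht
    have hc : ContinuousAt (fun u => I 2 u / M u - (I 1 u / M u) ^ 2) t := by
      have c2 := (hder 2 t ht).continuousAt
      have c1 := (hder 1 t ht).continuousAt
      have c0 := (hder 0 t ht).continuousAt
      rw [hI0] at c0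
      have hne := (hpos t ht).ne'
      exact ((c2.div c0 hne).sub ((c1.div c0 hne).pow 2))
    refine hc.congr ?_
    exact Filter.eventuallyEq_of_mem (isOpen_Ioo.mem_nhds ht) fun s hs => (hVeq s hs).symm
  have hφcontS : ∀ t ∈ Set.Ioo (-ε) (lam₀ + ε), ContinuousAt φ t := fun t ht =>
    (hφ t ht).continuousAt
  -- inner FTC
  have hinner : ∀ t ∈ Set.Icc (0 : ℝ) lam, (∫ s in t..lam, V s) = φ lam - φ t := by
    rintro t ⟨ht0, htlam⟩
    have huIcc : Set.uIcc t lam ⊆ Set.Ioo (-ε) (lam₀ + ε) := by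
      rw [Set.uIcc_of_le htlam]
      exact fun s hs => hsub ⟨le_trans ht0 hs.1, hs.2⟩
    exact intervalIntegral.integral_eq_sub_of_hasDerivAt (fun s hs => hφ s (huIcc hs))
      (ContinuousOn.intervalIntegrable fun s hs => (hVcont s (huIcc hs)).continuousWithinAt)
  have huIcc0 : Set.uIcc (0 : ℝ) lam ⊆ Set.Ioo (-ε) (lam₀ + ε) := by
    rw [Set.uIcc_of_le hlam0]; exact hsub
  have hRHS1 : (∫ t in (0:ℝ)..lam, ∫ s in t..lam, V s) = ∫ t in (0:ℝ)..lam, (φ lam - φ t) :=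
    intervalIntegral.integral_congr (by
      rw [Set.uIcc_of_le hlam0]; exact fun t ht => hinner t ht)
  have hφint : IntervalIntegrable φ MeasureTheory.volume 0 lam :=
    ContinuousOn.intervalIntegrable fun s hs => (hφcontS s (huIcc0 hs)).continuousWithinAt
  have hψint : (∫ t in (0:ℝ)..lam, φ t) = ψ lam - ψ 0 :=
    intervalIntegral.integral_eq_sub_of_hasDerivAt (fun s hs => hψ s (huIcc0 hs)) hφint
  have hψ0 : ψ 0 = 0 := by
    simp only [hψdef, hMdef, zero_mul, Real.exp_zero, integral_const, measure_univ, probReal_univ,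
      ENNReal.toReal_one, smul_eq_mul, mul_one, Real.log_one]
  have hRHS2 : (∫ t in (0:ℝ)..lam, (φ lam - φ t)) = lam * φ lam - ψ lam := by
    rw [intervalIntegral.integral_sub intervalIntegrable_const hφint,
      intervalIntegral.integral_const, hψint, hψ0, smul_eq_mul, sub_zero, sub_zero]
  -- LHS
  have hT : IsProbabilityMeasure (P.tilted (fun ω => lam * f ω)) :=
    isProbabilityMeasure_tilted (hexp lam hlamS)
  have hfT : Integrable f (P.tilted (fun ω => lam * f ω)) := by
    have := maurer_integrable_pow_tilted P f hfmeas lam₀ ε hexp 1 hlamS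
    simpa using this
  have hintf : ∫ ω, f ω ∂(P.tilted (fun ω => lam * f ω)) = φ lam := by
    have := maurer_integral_pow_tilted P f lam 1
    simpa [hφdef, hIdef, hMdef] using this
  have hLHS : relEntR (P.tilted (fun ω => lam * f ω)) P = lam * φ lam - ψ lam := by
    rw [relEntR]
    have hae := log_rnDeriv_tilted_left_self (μ := P) (f := fun ω => lam * f ω)
      (hexp lam hlamS)
    have hac : P.tilted (fun ω => lam * f ω) ≪ P := tilted_absolutelyContinuous P _
    have hae' := hae.filter_mono hac.ae_le
    rw [integral_congr_ae hae']
    rw [integral_sub (hfT.const_mul lam) (integrable_const _), integral_const, probReal_univ,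
      MeasureTheory.integral_const_mul, hintf]
    simp only [ENNReal.toReal_one, one_smul, hψdef, hMdef]
  rw [hLHS, hRHS1, hRHS2]
end
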